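/- Reduction of the transport-with-trading problem to supermartingale measures: Let μ₁,…,μ_n be Borel probability measures on ℝ₊ with finite first moments such that M⁻_μ ≠ ∅, and let G : ℝ₊^n → [−∞, ∞) be upper semi-continuous and bounded. For bounded measurable nonnegative Δ_j write G_Δ(s₁,…,s_n) = G(s₁,…,s_n) − Σ_{j=0}^{n−1} Δ_j(s₁,…,s_j)(s_{j+1} − s_j) (with s₀ fixed). Then sup_{π ∈ Π_μ} inf{∫ G_Δ dπ : Δ_j ∈ C_c(ℝ₊^j, ℝ₊), j = 0,…,n−1} = sup_{ℙ ∈ M⁻_μ} E_ℙ[G]; in particular, for any π ∈ Π_μ \ M⁻_μ the inner infimum equals −∞. -/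

import Mathlib

open MeasureTheory Set Filter Topology
open scoped ENNReal NNReal Classical

noncomputable section

namespace RobustFin

/-- Canonical path space: the values `S₀, S₁, …, S_n` of the asset. -/
abbrev Path (n : ℕ) := Fin (n + 1) → ℝ

/-- Paths starting at `s₀` with nonnegative coordinates: the canonical space `Ω`. -/
def Omega (n : ℕ) (s₀ : ℝ) : Set (Path n) := {ω | ω 0 = s₀ ∧ ∀ i, 0 ≤ ω i}

/-- The first `j` coordinates `S₁, …, S_j` of a path. -/
def restr {n : ℕ} (j : Fin n) (ω : Path n) : Fin j → ℝ :=
  fun i => ω ⟨(i : ℕ) + 1, by have h1 := i.isLt; have h2 := j.isLt; omega⟩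

/-- The coordinates `S₁, …, S_n` of a path. -/
def tailCoords {n : ℕ} (ω : Path n) : Fin n → ℝ := fun i => ω i.succ

/-- A dynamic trading strategy: bounded measurable positions `Δ_j(S₁,…,S_j)`. -/
structure Dyn (n : ℕ) where
  pos : (j : Fin n) → (Fin j → ℝ) → ℝ
  meas : ∀ j, Measurable (pos j)
  bdd : ∀ j, ∃ C, ∀ x, |pos j x| ≤ C

/-- No short selling: all dynamic positions are nonnegative. -/
def Dyn.Nonneg {n : ℕ} (D : Dyn n) : Prop := ∀ j x, 0 ≤ D.pos j x

/-- Gains from dynamic trading: `Σ_j Δ_j(S₁,…,S_j)(S_{j+1} − S_j)`. -/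
def Dyn.gains {n : ℕ} (D : Dyn n) (ω : Path n) : ℝ :=
  ∑ j : Fin n, D.pos j (restr j ω) * (ω j.succ - ω j.castSucc)

/-- A static option portfolio: a constant (cash) position plus a finite linear
combination of options with maturity indices `idx` and nonnegative strikes. -/
structure Static (n : ℕ) where
  const : ℝ
  m : ℕ
  coeff : Fin m → ℝ
  idx : Fin m → Fin n
  strike : Fin m → ℝ
  strike_nonneg : ∀ k, 0 ≤ strike k

/-- Payoff of the portfolio when the options are call options. -/
def Static.callPayoff {n : ℕ} (X : Static n) (ω : Path n) : ℝ :=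
  X.const + ∑ k, X.coeff k * max (ω (X.idx k).succ - X.strike k) 0

/-- Payoff of the portfolio when the options are put options. -/
def Static.putPayoff {n : ℕ} (X : Static n) (ω : Path n) : ℝ :=
  X.const + ∑ k, X.coeff k * max (X.strike k - ω (X.idx k).succ) 0

/-- Price of a static portfolio, given the unit option prices `c i K`;
this is the (unique) linear pricing functional determined by the prices. -/
def Static.price {n : ℕ} (X : Static n) (c : Fin n → ℝ → ℝ) : ℝ :=
  X.const + ∑ k, X.coeff k * c (X.idx k) (X.strike k)

/-- Expectation of a real payoff, valued in `EReal`, with the convention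
`∞ − ∞ = −∞` (in `EReal`, `⊤ - ⊤ = ⊥`). -/
def eexp {n : ℕ} (P : Measure (Path n)) (f : Path n → ℝ) : EReal :=
  ((∫⁻ ω, ENNReal.ofReal (f ω) ∂P : ℝ≥0∞) : EReal) -
    ((∫⁻ ω, ENNReal.ofReal (-(f ω)) ∂P : ℝ≥0∞) : EReal)

/-- The positive part of an extended real number, in `ℝ≥0∞`. -/
def posE (x : EReal) : ℝ≥0∞ := if x = ⊤ then ⊤ else ENNReal.ofReal x.toReal

/-- Expectation of an `EReal`-valued payoff, with the convention `∞ − ∞ = −∞`. -/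
def eexpE {n : ℕ} (P : Measure (Path n)) (f : Path n → EReal) : EReal :=
  ((∫⁻ ω, posE (f ω) ∂P : ℝ≥0∞) : EReal) - ((∫⁻ ω, posE (-(f ω)) ∂P : ℝ≥0∞) : EReal)

/-- A market calibrated model for the market with static payoffs `pay` (calls or puts),
prices `c` and prediction set `P`. -/
def Calibrated {n : ℕ} (pay : Static n → Path n → ℝ) (c : Fin n → ℝ → ℝ)
    (P : Set (Path n)) (Q : Measure (Path n)) : Prop :=
  IsProbabilityMeasure Q ∧ Q P = 1 ∧
    ∀ (X : Static n) (D : Dyn n), D.Nonneg →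
      eexp Q (fun ω => pay X ω + D.gains ω) ≤ (X.price c : EReal)

/-- A weak free lunch with vanishing risk. -/
def WFLVR {n : ℕ} (pay : Static n → Path n → ℝ) (c : Fin n → ℝ → ℝ)
    (P : Set (Path n)) : Prop :=
  ∃ (Xs : ℕ → Static n) (Ds : ℕ → Dyn n) (X : Static n) (D : Dyn n) (L : ℝ),
    (∀ k, (Ds k).Nonneg) ∧ D.Nonneg ∧
    (∀ ω ∈ P, Tendsto (fun k => pay (Xs k) ω + (Ds k).gains ω) atTop (nhds 0)) ∧
    (∀ k, ∀ ω ∈ P, pay X ω + D.gains ω ≤ pay (Xs k) ω + (Ds k).gains ω) ∧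
    Tendsto (fun k => (Xs k).price c) atTop (nhds L) ∧ L < 0

/-- A robust uniformly strong arbitrage. -/
def RobustArbitrage {n : ℕ} (pay : Static n → Path n → ℝ) (c : Fin n → ℝ → ℝ)
    (P : Set (Path n)) : Prop :=
  ∃ (X : Static n) (D : Dyn n), D.Nonneg ∧ X.price c < 0 ∧
    ∀ ω ∈ P, 0 ≤ pay X ω + D.gains ω

/-- The superhedging price of `G` over semi-static strategies (no short selling). -/
def V {n : ℕ} (pay : Static n → Path n → ℝ) (c : Fin n → ℝ → ℝ)
    (P : Set (Path n)) (G : Path n → EReal) : EReal :=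
  sInf {q : EReal | ∃ (X : Static n) (D : Dyn n), D.Nonneg ∧ q = (X.price c : EReal) ∧
    ∀ ω ∈ P, G ω ≤ ((pay X ω + D.gains ω : ℝ) : EReal)}

/-- The superhedging price of `G` when the dynamic positions may take both signs. -/
def Vsigned {n : ℕ} (pay : Static n → Path n → ℝ) (c : Fin n → ℝ → ℝ)
    (P : Set (Path n)) (G : Path n → EReal) : EReal :=
  sInf {q : EReal | ∃ (X : Static n) (D : Dyn n), q = (X.price c : EReal) ∧
    ∀ ω ∈ P, G ω ≤ ((pay X ω + D.gains ω : ℝ) : EReal)}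

/-- `Π_μ`: probability measures on the path space with marginals `δ_{s₀}, μ₁, …, μ_n`. -/
def PiMu {n : ℕ} (s₀ : ℝ) (μ : Fin n → Measure ℝ) : Set (Measure (Path n)) :=
  {π | IsProbabilityMeasure π ∧ π (Omega n s₀) = 1 ∧
       ∀ i : Fin n, π.map (fun ω => ω i.succ) = μ i}

/-- The coordinate process is a supermartingale in its natural filtration:
for every Borel `A ⊆ ℝ₊^j`, `∫ 1_A(S₁,…,S_j)(S_{j+1} − S_j) dπ ≤ 0`. -/
def IsSupermartingaleLaw {n : ℕ} (π : Measure (Path n)) : Prop :=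
  ∀ (j : Fin n) (A : Set (Fin j → ℝ)), MeasurableSet A →
    ∫ ω, Set.indicator A (fun _ => (1 : ℝ)) (restr j ω) * (ω j.succ - ω j.castSucc) ∂π ≤ 0

/-- `M⁻_μ`: calibrated supermartingale measures. -/
def MSet {n : ℕ} (s₀ : ℝ) (μ : Fin n → Measure ℝ) : Set (Measure (Path n)) :=
  {π ∈ PiMu s₀ μ | IsSupermartingaleLaw π}

/-- `M⁻_{μ,𝔓}`: calibrated supermartingale measures giving full mass to `P`. -/
def MSetP {n : ℕ} (s₀ : ℝ) (μ : Fin n → Measure ℝ) (P : Set (Path n)) :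
    Set (Measure (Path n)) :=
  {π ∈ MSet s₀ μ | π P = 1}

/-- Assumption A on the marginals. -/
def AssumptionA {n : ℕ} (s₀ : ℝ) (μ : Fin n → Measure ℝ) : Prop :=
  (∀ i, ∫ x, x ∂(μ i) ≤ s₀) ∧
  (∀ i j : Fin n, i ≤ j → ∫ x, x ∂(μ j) ≤ ∫ x, x ∂(μ i)) ∧
  (∀ φ : ℝ → ℝ, ConcaveOn ℝ Set.univ φ → Monotone φ → (∀ x, 0 ≤ φ x) →
    ∀ i j : Fin n, i ≤ j → ∫ x, φ x ∂(μ j) ≤ ∫ x, φ x ∂(μ i))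

/-- Condition C (i): each `c_i` is nonnegative, convex and nonincreasing on `ℝ₊`. -/
def CondC1 {n : ℕ} (c : Fin n → ℝ → ℝ) : Prop :=
  ∀ i, (∀ x, 0 ≤ x → 0 ≤ c i x) ∧ ConvexOn ℝ (Set.Ici 0) (c i) ∧ AntitoneOn (c i) (Set.Ici 0)

/-- Condition C (ii): `s₀ ≥ c₁(0) ≥ … ≥ c_n(0) ≥ 0` and `c_i'(0+) ≥ −1`
(the latter expressed, for convex `c_i`, through the slopes at `0`). -/
def CondC2 {n : ℕ} (s₀ : ℝ) (c : Fin n → ℝ → ℝ) : Prop :=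
  (∀ i, c i 0 ≤ s₀) ∧ (∀ i j : Fin n, i ≤ j → c j 0 ≤ c i 0) ∧ (∀ i, 0 ≤ c i 0) ∧
    (∀ i, ∀ K : ℝ, 0 < K → c i 0 - K ≤ c i K)

/-- Condition C (iii): `c_i(K) → 0` as `K → ∞`. -/
def CondC3 {n : ℕ} (c : Fin n → ℝ → ℝ) : Prop :=
  ∀ i, Tendsto (c i) atTop (nhds 0)

/-- Condition C (iv): for every `x ≥ 0`, `c_i(0) − c_i(x)` is nonincreasing in `i`. -/
def CondC4 {n : ℕ} (c : Fin n → ℝ → ℝ) : Prop :=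
  ∀ x : ℝ, 0 ≤ x → ∀ i j : Fin n, i ≤ j → c j 0 - c j x ≤ c i 0 - c i x

/-- Condition C. -/
def CondC {n : ℕ} (s₀ : ℝ) (c : Fin n → ℝ → ℝ) : Prop :=
  CondC1 c ∧ CondC2 s₀ c ∧ CondC3 c ∧ CondC4 c

/-- Condition P (i). -/
def CondP1 {n : ℕ} (p : Fin n → ℝ → ℝ) : Prop :=
  ∀ i, (∀ x, 0 ≤ x → 0 ≤ p i x) ∧ ConvexOn ℝ (Set.Ici 0) (p i) ∧ MonotoneOn (p i) (Set.Ici 0)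

/-- Condition P (ii): `s₀ ≥ lim (x − p₁(x)) ≥ … ≥ 0` and `0 ≤ p_i'(0+) ≤ 1`. -/
def CondP2 {n : ℕ} (s₀ : ℝ) (p : Fin n → ℝ → ℝ) : Prop :=
  (∃ L : Fin n → ℝ,
    (∀ i, Tendsto (fun x => x - p i x) atTop (nhds (L i))) ∧
    (∀ i, L i ≤ s₀) ∧ (∀ i j : Fin n, i ≤ j → L j ≤ L i) ∧ (∀ i, 0 ≤ L i)) ∧
  (∃ d : Fin n → ℝ,
    (∀ i, Tendsto (fun K => (p i K - p i 0) / K) (nhdsWithin 0 (Set.Ioi 0)) (nhds (d i))) ∧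
    (∀ i, 0 ≤ d i ∧ d i ≤ 1))

/-- Condition P (iii): `p_i(K) → 0` as `K → 0` (within `ℝ₊`). -/
def CondP3 {n : ℕ} (p : Fin n → ℝ → ℝ) : Prop :=
  ∀ i, Tendsto (p i) (nhdsWithin 0 (Set.Ici 0)) (nhds 0)

/-- Condition P (iv): `p_i(x)` is nondecreasing in `i`. -/
def CondP4 {n : ℕ} (p : Fin n → ℝ → ℝ) : Prop :=
  ∀ x : ℝ, 0 ≤ x → ∀ i j : Fin n, i ≤ j → p i x ≤ p j x

/-- Condition P. -/
def CondP {n : ℕ} (s₀ : ℝ) (p : Fin n → ℝ → ℝ) : Prop :=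
  CondP1 p ∧ CondP2 s₀ p ∧ CondP3 p ∧ CondP4 p

/-- The measures `μ_i` defined from the put prices by `μ_i([0,K]) = p_i'(K)`;
equivalently, `p_i(K) = ∫ (K − x)⁺ μ_i(dx)`. -/
def PutPricesFrom {n : ℕ} (p : Fin n → ℝ → ℝ) (μ : Fin n → Measure ℝ) : Prop :=
  (∀ i, IsProbabilityMeasure (μ i)) ∧ (∀ i, μ i (Set.Iio 0) = 0) ∧
  (∀ i, Integrable (fun x => x) (μ i)) ∧
  (∀ i, ∀ K : ℝ, 0 ≤ K → p i K = ∫ x, max (K - x) 0 ∂(μ i))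

/-- The path `(s₀, s₁, …, s_i, x, s_{i+2}, …, s_n)`. -/
def mkPath {n : ℕ} (s₀ : ℝ) (i : Fin n) (s : Fin i → ℝ) (x : ℝ)
    (t : Fin (n - ((i : ℕ) + 1)) → ℝ) : Path n := fun j =>
  if h0 : (j : ℕ) = 0 then s₀
  else if h1 : (j : ℕ) ≤ (i : ℕ) then
    s ⟨(j : ℕ) - 1, by have := j.isLt; have := i.isLt; omega⟩
  else if h2 : (j : ℕ) = (i : ℕ) + 1 then x
  else t ⟨(j : ℕ) - (i : ℕ) - 2, by have := j.isLt; have := i.isLt; omega⟩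

/-- The family `β_i : ℝ₊^i → ℝ` defined recursively by `β_n = 0` and
`β_i(s₁,…,s_i) = (sup_{s_{i+2},…,s_n} limsup_{x→∞} ((β_{i+1}(s₁,…,s_i,x)
 + G(s₁,…,s_i,x,s_{i+2},…,s_n)/x)·1_𝔓)) ∨ 0`. -/
def IsBetaFamily {n : ℕ} (s₀ : ℝ) (P : Set (Path n)) (G : (Fin n → ℝ) → EReal)
    (β : (i : Fin (n + 1)) → (Fin i → ℝ) → ℝ) : Prop :=
  (∀ s, β (Fin.last n) s = 0) ∧
  ∀ (i : Fin n) (s : Fin i → ℝ), (∀ k, 0 ≤ s k) →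
    (β ⟨(i : ℕ), by have := i.isLt; omega⟩ s : EReal) =
      max 0 (⨆ (t : Fin (n - ((i : ℕ) + 1)) → ℝ) (_ : ∀ k, 0 ≤ t k),
        Filter.limsup (fun x : ℝ =>
          if mkPath s₀ i s x t ∈ P then
            ((β ⟨(i : ℕ) + 1, by have := i.isLt; omega⟩ (Fin.snoc s x) : ℝ) : EReal)
              + G (tailCoords (mkPath s₀ i s x t)) * ((x⁻¹ : ℝ) : EReal)
          else 0) Filter.atTop)

/-- Gains of the dynamic strategy `(β_i)`: `β₀(S₁ − s₀) + Σ_i β_i(S₁,…,S_i)(S_{i+1} − S_i)`. -/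
def gainsOf {n : ℕ} (β : (i : Fin (n + 1)) → (Fin i → ℝ) → ℝ) (ω : Path n) : ℝ :=
  ∑ j : Fin n, β ⟨(j : ℕ), by have := j.isLt; omega⟩ (restr j ω) * (ω j.succ - ω j.castSucc)

/-- The penalty function `λ_𝔓(s₁,…,s_n) = (1 + s₁ + … + s_n)·1{(s₁,…,s_n) ∉ 𝔓}`. -/
def lambdaP {n : ℕ} (P : Set (Path n)) (ω : Path n) : ℝ :=
  if ω ∈ P then 0 else 1 + ∑ i : Fin n, ω i.succ

/-- `min(s₀, s₁, …, s_m)`. -/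
def pmin {m : ℕ} (s₀ : ℝ) (s : Fin m → ℝ) : ℝ :=
  Finset.univ.inf' Finset.univ_nonempty
    (fun j : Fin (m + 1) =>
      if h : (j : ℕ) = 0 then s₀ else s ⟨(j : ℕ) - 1, by have := j.isLt; omega⟩)

/-- `max(s₀, s₁, …, s_m)`. -/
def pmax {m : ℕ} (s₀ : ℝ) (s : Fin m → ℝ) : ℝ :=
  Finset.univ.sup' Finset.univ_nonempty
    (fun j : Fin (m + 1) =>
      if h : (j : ℕ) = 0 then s₀ else s ⟨(j : ℕ) - 1, by have := j.isLt; omega⟩)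


section Aux

variable {n : ℕ}

lemma measurable_restr (j : Fin n) : Measurable (restr (n := n) j) :=
  measurable_pi_lambda _ fun _ => measurable_pi_apply _

lemma measurableSet_Omega (s₀ : ℝ) : MeasurableSet (Omega n s₀) := by
  have : Omega n s₀ = ((fun ω : Path n => ω 0) ⁻¹' {s₀}) ∩ ⋂ i, (fun ω : Path n => ω i) ⁻¹' (Set.Ici 0) := by
    ext ω; simp [Omega, Set.mem_iInter]
  rw [this]
  exact (measurable_pi_apply 0 (measurableSet_singleton s₀)).inter
    (MeasurableSet.iInter fun i => measurable_pi_apply i measurableSet_Ici)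

lemma coord_integrable {s₀ : ℝ} {μ : Fin n → Measure ℝ} {π : Measure (Path n)}
    (hπ : π ∈ PiMu s₀ μ) (hmom : ∀ i, Integrable (fun x : ℝ => x) (μ i)) (i : Fin (n + 1)) :
    Integrable (fun ω => ω i) π := by
  obtain ⟨hP, hΩ, hm⟩ := hπ
  rcases eq_or_ne i 0 with rfl | hi
  · have hcompl : π (Omega n s₀)ᶜ = 0 := by
      rw [measure_compl (measurableSet_Omega s₀) (measure_ne_top π _), hΩ, hP.measure_univ,
        tsub_self]
    have hae : (fun ω : Path n => ω 0) =ᵐ[π] fun _ => s₀ := by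
      have hmem : Omega n s₀ ∈ ae π := by rw [mem_ae_iff, hcompl]
      exact Filter.eventuallyEq_of_mem hmem fun ω hω => hω.1
    exact (integrable_const s₀).congr hae.symm
  · obtain ⟨k, rfl⟩ := Fin.eq_succ_of_ne_zero hi
    have h2 : Integrable (fun x : ℝ => x) (π.map (fun ω => ω k.succ)) := by
      rw [hm k]; exact hmom k
    have := (integrable_map_measure aestronglyMeasurable_id
      (((measurable_pi_apply (k.succ) : Measurable fun ω : Path n => ω k.succ)).aemeasurable)).mp h2
    exact this


/-- `Δ_j = S_{j+1} - S_j`. -/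
def dS {n : ℕ} (j : Fin n) (ω : Path n) : ℝ := ω j.succ - ω j.castSucc

lemma dS_integrable {s₀ : ℝ} {μ : Fin n → Measure ℝ} {π : Measure (Path n)}
    (hπ : π ∈ PiMu s₀ μ) (hmom : ∀ i, Integrable (fun x : ℝ => x) (μ i)) (j : Fin n) :
    Integrable (dS j) π :=
  (coord_integrable hπ hmom j.succ).sub (coord_integrable hπ hmom j.castSucc)

lemma measurable_dS (j : Fin n) : Measurable (dS (n := n) j) :=
  (measurable_pi_apply _).sub (measurable_pi_apply _)

/-- positive part measure of `Δ_j` pushed to `ℝ^j`. -/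
def nuPos {n : ℕ} (π : Measure (Path n)) (j : Fin n) : Measure (Fin j → ℝ) :=
  (π.withDensity fun ω => ENNReal.ofReal (dS j ω)).map (restr j)

def nuNeg {n : ℕ} (π : Measure (Path n)) (j : Fin n) : Measure (Fin j → ℝ) :=
  (π.withDensity fun ω => ENNReal.ofReal (-(dS j ω))).map (restr j)

lemma lintegral_nuPos {π : Measure (Path n)} (j : Fin n) {f : (Fin j → ℝ) → ℝ≥0∞}
    (hf : Measurable f) :
    ∫⁻ s, f s ∂(nuPos π j) = ∫⁻ ω, f (restr j ω) * ENNReal.ofReal (dS j ω) ∂π := by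
  have hg : Measurable fun ω : Path n => f (restr j ω) := hf.comp (measurable_restr j)
  rw [nuPos, lintegral_map hf (measurable_restr j),
    lintegral_withDensity_eq_lintegral_mul _ (measurable_dS j).ennreal_ofReal hg]
  simp [mul_comm]

lemma lintegral_nuNeg {π : Measure (Path n)} (j : Fin n) {f : (Fin j → ℝ) → ℝ≥0∞}
    (hf : Measurable f) :
    ∫⁻ s, f s ∂(nuNeg π j) = ∫⁻ ω, f (restr j ω) * ENNReal.ofReal (-(dS j ω)) ∂π := by
  have hg : Measurable fun ω : Path n => f (restr j ω) := hf.comp (measurable_restr j)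
  rw [nuNeg, lintegral_map hf (measurable_restr j),
    lintegral_withDensity_eq_lintegral_mul _
      (show Measurable fun ω => ENNReal.ofReal (-(dS j ω)) from (measurable_dS j).neg.ennreal_ofReal) hg]
  simp [mul_comm]

lemma nuPos_univ_lt_top {π : Measure (Path n)} (j : Fin n) (hd : Integrable (dS j) π) :
    nuPos π j Set.univ < ⊤ := by
  rw [← lintegral_one, lintegral_nuPos j measurable_const]
  calc ∫⁻ ω, 1 * ENNReal.ofReal (dS j ω) ∂π ≤ ∫⁻ ω, (‖dS j ω‖₊ : ℝ≥0∞) ∂π := by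
        refine lintegral_mono fun ω => ?_
        rw [one_mul, ← enorm_eq_nnnorm, Real.enorm_eq_ofReal_abs]
        exact ENNReal.ofReal_le_ofReal (le_abs_self _)
    _ < ⊤ := hd.2

lemma nuNeg_univ_lt_top {π : Measure (Path n)} (j : Fin n) (hd : Integrable (dS j) π) :
    nuNeg π j Set.univ < ⊤ := by
  rw [← lintegral_one, lintegral_nuNeg j measurable_const]
  calc ∫⁻ ω, 1 * ENNReal.ofReal (-(dS j ω)) ∂π ≤ ∫⁻ ω, (‖dS j ω‖₊ : ℝ≥0∞) ∂π := by
        refine lintegral_mono fun ω => ?_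
        rw [one_mul, ← enorm_eq_nnnorm, Real.enorm_eq_ofReal_abs]
        exact ENNReal.ofReal_le_ofReal (neg_le_abs _)
    _ < ⊤ := hd.2

/-- Representation of `∫ f(restr ω)Δ_j` through the two measures. -/
lemma integral_mul_dS_rep {π : Measure (Path n)} (j : Fin n)
    {f : (Fin j → ℝ) → ℝ} (hf : Measurable f) (hf0 : ∀ x, 0 ≤ f x)
    (hint : Integrable (fun ω => f (restr j ω) * dS j ω) π) :
    ∫ ω, f (restr j ω) * dS j ω ∂π
      = (∫⁻ s, ENNReal.ofReal (f s) ∂(nuPos π j)).toReal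
        - (∫⁻ s, ENNReal.ofReal (f s) ∂(nuNeg π j)).toReal := by
  have e1 : ∫⁻ ω, ENNReal.ofReal (f (restr j ω) * dS j ω) ∂π
      = ∫⁻ ω, ENNReal.ofReal (f (restr j ω)) * ENNReal.ofReal (dS j ω) ∂π :=
    lintegral_congr fun ω => ENNReal.ofReal_mul (hf0 _)
  have e2 : ∫⁻ ω, ENNReal.ofReal (-(f (restr j ω) * dS j ω)) ∂π
      = ∫⁻ ω, ENNReal.ofReal (f (restr j ω)) * ENNReal.ofReal (-(dS j ω)) ∂π :=
    lintegral_congr fun ω => by rw [← ENNReal.ofReal_mul (hf0 _), mul_neg]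
  rw [integral_eq_lintegral_pos_part_sub_lintegral_neg_part hint, e1, e2,
    ← lintegral_nuPos j hf.ennreal_ofReal, ← lintegral_nuNeg j hf.ennreal_ofReal]

lemma integrable_mul_dS {s₀ : ℝ} {μ : Fin n → Measure ℝ} {π : Measure (Path n)}
    (hπ : π ∈ PiMu s₀ μ) (hmom : ∀ i, Integrable (fun x : ℝ => x) (μ i)) (j : Fin n)
    {f : (Fin j → ℝ) → ℝ} (hf : Measurable f) (C : ℝ) (hC : ∀ x, |f x| ≤ C) :
    Integrable (fun ω => f (restr j ω) * dS j ω) π := by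
  refine (dS_integrable hπ hmom j).bdd_mul (c := C) ?_ (Filter.Eventually.of_forall fun ω => ?_)
  · exact (hf.comp (measurable_restr j)).aestronglyMeasurable
  · exact (Real.norm_eq_abs _).le.trans (hC _)

/-- The supermartingale property gives `ν⁺ ≤ ν⁻`. -/
lemma nuPos_le_nuNeg {s₀ : ℝ} {μ : Fin n → Measure ℝ} {π : Measure (Path n)}
    (hπ : π ∈ PiMu s₀ μ) (hmom : ∀ i, Integrable (fun x : ℝ => x) (μ i))
    (hS : IsSupermartingaleLaw π) (j : Fin n) : nuPos π j ≤ nuNeg π j := by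
  rw [Measure.le_iff]
  intro A hA
  have hd := dS_integrable hπ hmom j
  have hf : Measurable (Set.indicator A (fun _ => (1:ℝ))) :=
    measurable_const.indicator hA
  have hf0 : ∀ x, 0 ≤ Set.indicator A (fun _ => (1:ℝ)) x := fun x =>
    Set.indicator_nonneg (fun _ _ => zero_le_one) x
  have hC : ∀ x, |Set.indicator A (fun _ => (1:ℝ)) x| ≤ 1 := fun x => by
    rw [abs_of_nonneg (hf0 x)]
    exact Set.indicator_le_self' (fun _ _ => zero_le_one) x |>.trans le_rfl
  have h := hS j A hA
  rw [show (fun ω => Set.indicator A (fun _ => (1:ℝ)) (restr j ω) * (ω j.succ - ω j.castSucc))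
      = fun ω => Set.indicator A (fun _ => (1:ℝ)) (restr j ω) * dS j ω from rfl] at h
  rw [integral_mul_dS_rep j hf hf0 (integrable_mul_dS hπ hmom j hf 1 hC)] at h
  have hind : ∀ (ν : Measure (Fin j → ℝ)),
      ∫⁻ s, ENNReal.ofReal (Set.indicator A (fun _ => (1:ℝ)) s) ∂ν = ν A := by
    intro ν
    have : (fun s => ENNReal.ofReal (Set.indicator A (fun _ => (1:ℝ)) s))
        = Set.indicator A (1 : (Fin j → ℝ) → ℝ≥0∞) := by
      funext s; by_cases hs : s ∈ A <;> simp [hs]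
    rw [this, lintegral_indicator_one hA]
  rw [hind, hind] at h
  have h1 : nuPos π j A ≠ ⊤ :=
    ((measure_mono (Set.subset_univ A)).trans_lt (nuPos_univ_lt_top j hd)).ne
  have h2 : nuNeg π j A ≠ ⊤ :=
    ((measure_mono (Set.subset_univ A)).trans_lt (nuNeg_univ_lt_top j hd)).ne
  have := sub_nonpos.mp h
  exact (ENNReal.toReal_le_toReal h1 h2).mp this


lemma lintegral_ofReal_lt_top {j : Fin n} (ν : Measure (Fin j → ℝ))
    (hν : ν Set.univ < ⊤) {f : (Fin j → ℝ) → ℝ} (C : ℝ) (hC : ∀ x, |f x| ≤ C) :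
    ∫⁻ s, ENNReal.ofReal (f s) ∂ν < ⊤ := by
  calc ∫⁻ s, ENNReal.ofReal (f s) ∂ν ≤ ∫⁻ _, ENNReal.ofReal C ∂ν :=
        lintegral_mono fun s => ENNReal.ofReal_le_ofReal ((le_abs_self _).trans (hC s))
    _ = ENNReal.ofReal C * ν Set.univ := by rw [lintegral_const]
    _ < ⊤ := ENNReal.mul_lt_top ENNReal.ofReal_lt_top hν

/-- Under a supermartingale law, dynamic gains from a nonnegative bounded measurable
position have nonpositive expectation. -/
lemma integral_term_nonpos {s₀ : ℝ} {μ : Fin n → Measure ℝ} {π : Measure (Path n)}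
    (hπ : π ∈ PiMu s₀ μ) (hmom : ∀ i, Integrable (fun x : ℝ => x) (μ i))
    (hS : IsSupermartingaleLaw π) (j : Fin n)
    {f : (Fin j → ℝ) → ℝ} (hf : Measurable f) (hf0 : ∀ x, 0 ≤ f x)
    (C : ℝ) (hC : ∀ x, |f x| ≤ C) :
    ∫ ω, f (restr j ω) * dS j ω ∂π ≤ 0 := by
  have hd := dS_integrable hπ hmom j
  rw [integral_mul_dS_rep j hf hf0 (integrable_mul_dS hπ hmom j hf C hC)]
  have hle : ∫⁻ s, ENNReal.ofReal (f s) ∂(nuPos π j)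
      ≤ ∫⁻ s, ENNReal.ofReal (f s) ∂(nuNeg π j) :=
    lintegral_mono' (nuPos_le_nuNeg hπ hmom hS j) le_rfl
  have hfin : ∫⁻ s, ENNReal.ofReal (f s) ∂(nuNeg π j) ≠ ⊤ :=
    (lintegral_ofReal_lt_top _ (nuNeg_univ_lt_top j hd) C hC).ne
  exact sub_nonpos.mpr (ENNReal.toReal_mono hfin hle)

/-- If the supermartingale property fails, there is a continuous compactly supported
nonnegative position with strictly positive expected gains. -/
lemma exists_good_g {s₀ : ℝ} {μ : Fin n → Measure ℝ} {π : Measure (Path n)}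
    (hπ : π ∈ PiMu s₀ μ) (hmom : ∀ i, Integrable (fun x : ℝ => x) (μ i))
    (hnot : ¬ IsSupermartingaleLaw π) :
    ∃ (j : Fin n) (g : (Fin j → ℝ) → ℝ), Continuous g ∧ HasCompactSupport g ∧
      (∀ x, 0 ≤ g x) ∧ (∀ x, g x ≤ 1) ∧
      0 < ∫ ω, g (restr j ω) * dS j ω ∂π := by
  simp only [IsSupermartingaleLaw, not_forall, not_le] at hnot
  obtain ⟨j, A, hA, hpos⟩ := hnot
  have hd := dS_integrable hπ hmom j
  set f : (Fin j → ℝ) → ℝ := Set.indicator A (fun _ => (1:ℝ)) with hfdef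
  have hf : Measurable f := measurable_const.indicator hA
  have hf0 : ∀ x, 0 ≤ f x := fun x => Set.indicator_nonneg (fun _ _ => zero_le_one) x
  have hf1 : ∀ x, f x ≤ 1 := fun x => Set.indicator_le' (fun _ _ => le_rfl) (fun _ _ => zero_le_one) x
  have hC : ∀ x, |f x| ≤ 1 := fun x => by rw [abs_of_nonneg (hf0 x)]; exact hf1 x
  set ε : ℝ := ∫ ω, f (restr j ω) * dS j ω ∂π with hεdef
  have hε : 0 < ε := hpos
  -- the combined finite measure
  set m : Measure (Fin j → ℝ) := nuPos π j + nuNeg π j with hmdef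
  have hmfin : m Set.univ < ⊤ := by
    rw [hmdef, Measure.add_apply]
    exact ENNReal.add_lt_top.mpr ⟨nuPos_univ_lt_top j hd, nuNeg_univ_lt_top j hd⟩
  haveI : IsFiniteMeasure m := ⟨hmfin⟩
  have hfint : Integrable f m := by
    refine ⟨hf.aestronglyMeasurable, ?_⟩
    rw [HasFiniteIntegral]
    calc ∫⁻ s, ‖f s‖₊ ∂m ≤ ∫⁻ _, 1 ∂m := by
          refine lintegral_mono fun s => ?_
          rw [← enorm_eq_nnnorm, Real.enorm_eq_ofReal_abs, ← ENNReal.ofReal_one]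
          exact ENNReal.ofReal_le_ofReal (hC s)
      _ = m Set.univ := by rw [lintegral_one]
      _ < ⊤ := hmfin
  obtain ⟨g₀, hg₀supp, hg₀close, hg₀cont, -⟩ :=
    hfint.exists_hasCompactSupport_lintegral_sub_le
      (ε := ENNReal.ofReal (ε/2)) (by simp [ENNReal.ofReal_eq_zero, not_le, half_pos hε])
  -- clamp g₀ to [0,1]
  set g : (Fin j → ℝ) → ℝ := fun x => min (max (g₀ x) 0) 1 with hgdef
  have hgcont : Continuous g := (hg₀cont.max continuous_const).min continuous_const
  have hg0 : ∀ x, 0 ≤ g x := fun x => le_min (le_max_right _ _) zero_le_one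
  have hg1 : ∀ x, g x ≤ 1 := fun x => min_le_right _ _
  have hgsupp : HasCompactSupport g := by
    refine HasCompactSupport.intro hg₀supp fun x hx => ?_
    have : g₀ x = 0 := image_eq_zero_of_notMem_tsupport hx
    simp [hgdef, this]
  have hclamp : ∀ x, |f x - g x| ≤ |f x - g₀ x| := by
    intro x
    rcases le_total (g₀ x) 0 with h | h
    · have hgx : g x = 0 := by
        rw [hgdef]; simp only [max_eq_right h, min_eq_left (zero_le_one' ℝ)]
      calc |f x - g x| = f x := by rw [hgx, sub_zero, abs_of_nonneg (hf0 x)]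
        _ ≤ f x - g₀ x := by linarith
        _ ≤ |f x - g₀ x| := le_abs_self _
    · rcases le_total (g₀ x) 1 with h2 | h2
      · have hgx : g x = g₀ x := by rw [hgdef]; simp [max_eq_left h, min_eq_left h2]
        rw [hgx]
      · have hgx : g x = 1 := by rw [hgdef]; simp [max_eq_left h, min_eq_right h2]
        have hf1x := hf1 x
        calc |f x - g x| = 1 - f x := by
              rw [hgx, abs_of_nonpos (by linarith)]; ring
          _ ≤ g₀ x - f x := by linarith
          _ ≤ |f x - g₀ x| := by rw [abs_sub_comm]; exact le_abs_self _
  -- quantitative estimate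
  have hg : Measurable g := hgcont.measurable
  have hCg : ∀ x, |g x| ≤ 1 := fun x => by rw [abs_of_nonneg (hg0 x)]; exact hg1 x
  set aP := ∫⁻ s, ENNReal.ofReal (g s) ∂(nuPos π j) with haP
  set aN := ∫⁻ s, ENNReal.ofReal (g s) ∂(nuNeg π j) with haN
  set bP := ∫⁻ s, ENNReal.ofReal (f s) ∂(nuPos π j) with hbP
  set bN := ∫⁻ s, ENNReal.ofReal (f s) ∂(nuNeg π j) with hbN
  set dP := ∫⁻ s, (‖f s - g s‖₊ : ℝ≥0∞) ∂(nuPos π j) with hdP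
  set dN := ∫⁻ s, (‖f s - g s‖₊ : ℝ≥0∞) ∂(nuNeg π j) with hdN
  have hfg : ∀ x, ENNReal.ofReal (f x) ≤ ENNReal.ofReal (g x) + (‖f x - g x‖₊ : ℝ≥0∞) := by
    intro x
    rw [← enorm_eq_nnnorm, Real.enorm_eq_ofReal_abs]
    calc ENNReal.ofReal (f x) ≤ ENNReal.ofReal (g x + |f x - g x|) :=
          ENNReal.ofReal_le_ofReal (by cases abs_cases (f x - g x) with
            | inl h => linarith [h.1] | inr h => linarith [h.1])
      _ ≤ _ := ENNReal.ofReal_add_le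
  have hgf : ∀ x, ENNReal.ofReal (g x) ≤ ENNReal.ofReal (f x) + (‖f x - g x‖₊ : ℝ≥0∞) := by
    intro x
    rw [← enorm_eq_nnnorm, Real.enorm_eq_ofReal_abs]
    calc ENNReal.ofReal (g x) ≤ ENNReal.ofReal (f x + |f x - g x|) :=
          ENNReal.ofReal_le_ofReal (by cases abs_cases (f x - g x) with
            | inl h => linarith [h.1] | inr h => linarith [h.1])
      _ ≤ _ := ENNReal.ofReal_add_le
  have hnn : Measurable fun s => (‖f s - g s‖₊ : ℝ≥0∞) := (hf.sub hg).enorm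
  have h1 : bP ≤ aP + dP := by
    rw [haP, hdP, ← lintegral_add_left hg.ennreal_ofReal]
    exact lintegral_mono fun s => hfg s
  have h2 : aN ≤ bN + dN := by
    rw [hbN, hdN, ← lintegral_add_left hf.ennreal_ofReal]
    exact lintegral_mono fun s => hgf s
  have hdsum : dP + dN ≤ ENNReal.ofReal (ε/2) := by
    calc dP + dN = ∫⁻ s, (‖f s - g s‖₊ : ℝ≥0∞) ∂m := (lintegral_add_measure _ _ _).symm
      _ ≤ ∫⁻ s, (‖f s - g₀ s‖₊ : ℝ≥0∞) ∂m := by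
          refine lintegral_mono fun s => ?_
          rw [← enorm_eq_nnnorm, ← enorm_eq_nnnorm, Real.enorm_eq_ofReal_abs, Real.enorm_eq_ofReal_abs]
          exact ENNReal.ofReal_le_ofReal (hclamp s)
      _ ≤ ENNReal.ofReal (ε/2) := hg₀close
  have hPfin := nuPos_univ_lt_top j hd
  have hNfin := nuNeg_univ_lt_top j hd
  have haPfin : aP ≠ ⊤ := (lintegral_ofReal_lt_top _ hPfin 1 hCg).ne
  have haNfin : aN ≠ ⊤ := (lintegral_ofReal_lt_top _ hNfin 1 hCg).ne
  have hbPfin : bP ≠ ⊤ := (lintegral_ofReal_lt_top _ hPfin 1 hC).ne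
  have hbNfin : bN ≠ ⊤ := (lintegral_ofReal_lt_top _ hNfin 1 hC).ne
  have hdPfin : dP ≠ ⊤ := by
    refine ne_top_of_le_ne_top ?_ (le_add_right le_rfl : dP ≤ dP + dN)
    exact (hdsum.trans_lt ENNReal.ofReal_lt_top).ne
  have hdNfin : dN ≠ ⊤ := by
    refine ne_top_of_le_ne_top ?_ (le_add_left le_rfl : dN ≤ dP + dN)
    exact (hdsum.trans_lt ENNReal.ofReal_lt_top).ne
  have h1' : bP.toReal ≤ aP.toReal + dP.toReal := by
    have := ENNReal.toReal_mono (by simp [ENNReal.add_ne_top, haPfin, hdPfin]) h1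
    rwa [ENNReal.toReal_add haPfin hdPfin] at this
  have h2' : aN.toReal ≤ bN.toReal + dN.toReal := by
    have := ENNReal.toReal_mono (by simp [ENNReal.add_ne_top, hbNfin, hdNfin]) h2
    rwa [ENNReal.toReal_add hbNfin hdNfin] at this
  have hd' : dP.toReal + dN.toReal ≤ ε/2 := by
    have := ENNReal.toReal_mono ENNReal.ofReal_ne_top hdsum
    rwa [ENNReal.toReal_add hdPfin hdNfin, ENNReal.toReal_ofReal (by linarith)] at this
  have hεrep : ε = bP.toReal - bN.toReal := by
    rw [hεdef, integral_mul_dS_rep j hf hf0 (integrable_mul_dS hπ hmom j hf 1 hC)]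
  have hgrep : ∫ ω, g (restr j ω) * dS j ω ∂π = aP.toReal - aN.toReal :=
    integral_mul_dS_rep j hg hg0 (integrable_mul_dS hπ hmom j hg 1 hCg)
  refine ⟨j, g, hgcont, hgsupp, hg0, hg1, ?_⟩
  rw [hgrep]
  have : ε/2 ≤ aP.toReal - aN.toReal := by linarith
  linarith

end Aux

section Aux2
variable {n : ℕ}

lemma measurableSet_nonneg : MeasurableSet {s : Fin n → ℝ | ∀ i, 0 ≤ s i} := by
  have : {s : Fin n → ℝ | ∀ i, 0 ≤ s i} = ⋂ i, (fun s : Fin n → ℝ => s i) ⁻¹' Set.Ici 0 := by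
    ext; simp [Set.mem_iInter]
  rw [this]; exact MeasurableSet.iInter fun i => measurable_pi_apply i measurableSet_Ici

lemma measurable_indicator_usc {G : (Fin n → ℝ) → ℝ}
    (h : UpperSemicontinuousOn G {s | ∀ i, 0 ≤ s i}) :
    Measurable (Set.indicator {s : Fin n → ℝ | ∀ i, 0 ≤ s i} G) := by
  set S := {s : Fin n → ℝ | ∀ i, 0 ≤ s i} with hSdef
  have hS : MeasurableSet S := measurableSet_nonneg
  have husc : UpperSemicontinuous (fun x : S => G x) := by
    intro x y hy
    have h2 := h x x.2 y hy
    rw [← map_nhds_subtype_val] at h2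
    exact eventually_map.mp h2
  have hmeas : Measurable fun x : S => G x := husc.measurable
  have hemb : MeasurableEmbedding (Subtype.val : S → (Fin n → ℝ)) :=
    MeasurableEmbedding.subtype_coe hS
  have hext : Set.indicator S G
      = Function.extend Subtype.val (fun x : S => G x) (fun _ => 0) := by
    funext x
    by_cases hx : x ∈ S
    · have := Subtype.val_injective.extend_apply (fun x : S => G x) (fun _ => (0:ℝ)) ⟨x, hx⟩
      simpa [Set.indicator_of_mem hx] using this.symm
    · rw [Set.indicator_of_notMem hx, Function.extend_apply']
      rintro ⟨a, rfl⟩; exact hx a.2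
  rw [hext]
  exact hemb.measurable_extend hmeas measurable_const

lemma measurable_tailCoords : Measurable (tailCoords (n := n)) :=
  measurable_pi_lambda _ fun _ => measurable_pi_apply _

lemma gains_eq_sum_dS (D : Dyn n) :
    D.gains = fun ω => ∑ j : Fin n, D.pos j (restr j ω) * dS j ω := rfl

lemma gains_integrable {s₀ : ℝ} {μ : Fin n → Measure ℝ} {π : Measure (Path n)}
    (hπ : π ∈ PiMu s₀ μ) (hmom : ∀ i, Integrable (fun x : ℝ => x) (μ i)) (D : Dyn n) :
    Integrable D.gains π := by
  rw [gains_eq_sum_dS]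
  refine integrable_finset_sum _ fun j _ => ?_
  obtain ⟨C, hC⟩ := D.bdd j
  exact integrable_mul_dS hπ hmom j (D.meas j) C hC

lemma gains_nonpos {s₀ : ℝ} {μ : Fin n → Measure ℝ} {π : Measure (Path n)}
    (hπ : π ∈ PiMu s₀ μ) (hmom : ∀ i, Integrable (fun x : ℝ => x) (μ i))
    (hS : IsSupermartingaleLaw π) (D : Dyn n) (hD : D.Nonneg) :
    ∫ ω, D.gains ω ∂π ≤ 0 := by
  rw [gains_eq_sum_dS]
  rw [integral_finset_sum _ (fun j _ => by
    obtain ⟨C, hC⟩ := D.bdd j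
    exact integrable_mul_dS hπ hmom j (D.meas j) C hC)]
  refine Finset.sum_nonpos fun j _ => ?_
  obtain ⟨C, hC⟩ := D.bdd j
  exact integral_term_nonpos hπ hmom hS j (D.meas j) (hD j) C hC

/-- The zero dynamic strategy. -/
def zeroDyn (n : ℕ) : Dyn n where
  pos := fun _ _ => 0
  meas := fun _ => measurable_const
  bdd := fun _ => ⟨0, by simp⟩

lemma zeroDyn_nonneg : (zeroDyn n).Nonneg := fun _ _ => le_rfl

lemma zeroDyn_cont : ∀ j, Continuous ((zeroDyn n).pos j) := fun _ => continuous_const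

lemma zeroDyn_supp : ∀ j, HasCompactSupport ((zeroDyn n).pos j) := fun j =>
  HasCompactSupport.intro isCompact_empty (fun _ _ => rfl)

lemma zeroDyn_gains (ω : Path n) : (zeroDyn n).gains ω = 0 := by
  simp [Dyn.gains, zeroDyn]

/-- The scaled single-period strategy `c·g` at period `j`. -/
lemma exists_scaled_dyn (j : Fin n) (g : (Fin j → ℝ) → ℝ)
    (hgc : Continuous g) (hgs : HasCompactSupport g) (hg0 : ∀ x, 0 ≤ g x)
    (c : ℝ) (hc : 0 ≤ c) :
    ∃ D : Dyn n, D.Nonneg ∧ (∀ j', Continuous (D.pos j')) ∧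
      (∀ j', HasCompactSupport (D.pos j')) ∧
      ∀ ω, D.gains ω = c * (g (restr j ω) * dS j ω) := by
  classical
  set body : (Fin j → ℝ) → ℝ := fun x => c * g x with hbody
  have hbodyc : Continuous body := continuous_const.mul hgc
  have hbodys : HasCompactSupport body := hgs.mul_left
  have hbody0 : ∀ x, 0 ≤ body x := fun x => mul_nonneg hc (hg0 x)
  obtain ⟨Cb, hCb⟩ := hbodys.exists_bound_of_continuous hbodyc
  refine ⟨⟨fun j' => if h : j' = j then h.symm ▸ body else fun _ => 0, ?_, ?_⟩, ?_, ?_, ?_, ?_⟩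
  · intro j'
    by_cases h : j' = j
    · subst h; rw [dif_pos rfl]; exact hbodyc.measurable
    · rw [dif_neg h]; exact measurable_const
  · intro j'
    by_cases h : j' = j
    · subst h; rw [dif_pos rfl]; exact ⟨Cb, fun x => by have := hCb x; rwa [Real.norm_eq_abs] at this⟩
    · rw [dif_neg h]; exact ⟨0, by simp⟩
  · intro j' x
    dsimp only
    by_cases h : j' = j
    · subst h; rw [dif_pos rfl]; exact hbody0 x
    · rw [dif_neg h]
  · intro j'
    dsimp only
    by_cases h : j' = j
    · subst h; rw [dif_pos rfl]; exact hbodyc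
    · rw [dif_neg h]; exact continuous_const
  · intro j'
    dsimp only
    by_cases h : j' = j
    · subst h; rw [dif_pos rfl]; exact hbodys
    · rw [dif_neg h]
      exact HasCompactSupport.intro isCompact_empty (fun _ _ => rfl)
  · intro ω
    show (∑ j' : Fin n, _) = _
    rw [Finset.sum_eq_single j]
    · dsimp only
      rw [dif_pos rfl]
      show body (restr j ω) * (ω j.succ - ω j.castSucc) = c * (g (restr j ω) * dS j ω)
      rw [hbody, mul_assoc]
      rfl
    · intro j' _ h
      dsimp only
      rw [dif_neg h, zero_mul]
    · intro h; exact absurd (Finset.mem_univ j) h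

/-- `x ≤ r` for every real `r` forces `x = ⊥` in `EReal`. -/
lemma EReal.eq_bot_of_le_coe {x : EReal} (h : ∀ r : ℝ, x ≤ (r : EReal)) : x = ⊥ := by
  induction x using EReal.rec with
  | bot => rfl
  | coe y =>
    have := h (y - 1)
    rw [EReal.coe_le_coe_iff] at this
    linarith
  | top =>
    have := h 0
    exact absurd this (by simp)

end Aux2

/-- reduction of the transport-with-trading problem to
supermartingale measures: for bounded upper semi-continuous `G`,
`sup_{π ∈ Π_μ} inf_Δ ∫ G_Δ dπ = sup_{ℙ ∈ M⁻_μ} E_ℙ[G]`, the infimum being over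
continuous, compactly supported, nonnegative dynamic positions; moreover for
`π ∈ Π_μ \ M⁻_μ` the inner infimum is `−∞`. -/

theorem reduction_to_supermartingales
    {n : ℕ} (hn : 1 ≤ n) {s₀ : ℝ} (hs₀ : 0 < s₀)
    (μ : Fin n → Measure ℝ) (hprob : ∀ i, IsProbabilityMeasure (μ i))
    (hsupp : ∀ i, μ i (Set.Iio 0) = 0) (hmom : ∀ i, Integrable (fun x => x) (μ i))
    (hne : (MSet s₀ μ).Nonempty)
    (G : (Fin n → ℝ) → ℝ)
    (hGusc : UpperSemicontinuousOn G {s | ∀ i, 0 ≤ s i})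
    (hGbdd : ∃ C : ℝ, ∀ s, |G s| ≤ C) :
    (⨆ π ∈ PiMu s₀ μ,
        ⨅ (D : Dyn n) (_ : D.Nonneg) (_ : ∀ j, Continuous (D.pos j))
          (_ : ∀ j, HasCompactSupport (D.pos j)),
          ((∫ ω, (G (tailCoords ω) - D.gains ω) ∂π : ℝ) : EReal)) =
      (⨆ Q ∈ MSet s₀ μ, ((∫ ω, G (tailCoords ω) ∂Q : ℝ) : EReal)) ∧
    ∀ π ∈ PiMu s₀ μ, π ∉ MSet s₀ μ →
      (⨅ (D : Dyn n) (_ : D.Nonneg) (_ : ∀ j, Continuous (D.pos j))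
          (_ : ∀ j, HasCompactSupport (D.pos j)),
          ((∫ ω, (G (tailCoords ω) - D.gains ω) ∂π : ℝ) : EReal)) = ⊥ := by
  classical
  obtain ⟨C, hC⟩ := hGbdd
  set S : Set (Fin n → ℝ) := {s | ∀ i, 0 ≤ s i} with hSdef
  set G' : (Fin n → ℝ) → ℝ := Set.indicator S G with hG'def
  have hG'meas : Measurable G' := measurable_indicator_usc hGusc
  have hG'bdd : ∀ s, |G' s| ≤ C := by
    intro s
    by_cases hs : s ∈ S
    · rw [hG'def, Set.indicator_of_mem hs]; exact hC s
    · rw [hG'def, Set.indicator_of_notMem hs, abs_zero]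
      exact (abs_nonneg (G s)).trans (hC s)
  -- facts valid for any π ∈ PiMu
  have main : ∀ π ∈ PiMu s₀ μ,
      (∀ ω ∈ Omega n s₀, G (tailCoords ω) = G' (tailCoords ω)) := by
    intro π hπ ω hω
    rw [hG'def, Set.indicator_of_mem]
    intro i; exact hω.2 i.succ
  have hGae : ∀ π ∈ PiMu s₀ μ,
      (fun ω => G (tailCoords ω)) =ᵐ[π] fun ω => G' (tailCoords ω) := by
    intro π hπ
    have hcompl : π (Omega n s₀)ᶜ = 0 := by
      haveI := hπ.1
      rw [measure_compl (measurableSet_Omega s₀) (measure_ne_top π _), hπ.2.1,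
        hπ.1.measure_univ, tsub_self]
    have hmem : Omega n s₀ ∈ ae π := by rw [mem_ae_iff, hcompl]
    exact Filter.eventuallyEq_of_mem hmem (main π hπ)
  have hG'int : ∀ π ∈ PiMu s₀ μ, Integrable (fun ω => G' (tailCoords ω)) π := by
    intro π hπ
    haveI := hπ.1
    refine Integrable.mono' (integrable_const C)
      ((hG'meas.comp measurable_tailCoords).aestronglyMeasurable) ?_
    exact Filter.Eventually.of_forall fun ω => hG'bdd (tailCoords ω)
  -- value of a strategy
  have hval : ∀ π ∈ PiMu s₀ μ, ∀ D : Dyn n,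
      ∫ ω, (G (tailCoords ω) - D.gains ω) ∂π
        = ∫ ω, G' (tailCoords ω) ∂π - ∫ ω, D.gains ω ∂π := by
    intro π hπ D
    rw [integral_congr_ae (show (fun ω => G (tailCoords ω) - D.gains ω) =ᵐ[π]
      fun ω => G' (tailCoords ω) - D.gains ω from (hGae π hπ).sub (Filter.EventuallyEq.refl _ _))]
    exact integral_sub (hG'int π hπ) (gains_integrable hπ hmom D)
  have hGG' : ∀ π ∈ PiMu s₀ μ,
      ∫ ω, G (tailCoords ω) ∂π = ∫ ω, G' (tailCoords ω) ∂π := fun π hπ =>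
    integral_congr_ae (hGae π hπ)
  -- inner infimum for supermartingale measures
  have hinfM : ∀ Q ∈ MSet s₀ μ,
      (⨅ (D : Dyn n) (_ : D.Nonneg) (_ : ∀ j, Continuous (D.pos j))
          (_ : ∀ j, HasCompactSupport (D.pos j)),
          ((∫ ω, (G (tailCoords ω) - D.gains ω) ∂Q : ℝ) : EReal))
        = ((∫ ω, G (tailCoords ω) ∂Q : ℝ) : EReal) := by
    intro Q hQ
    obtain ⟨hQ1, hQ2⟩ := hQ
    refine le_antisymm ?_ ?_
    · refine iInf_le_of_le (zeroDyn n) (iInf_le_of_le zeroDyn_nonneg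
        (iInf_le_of_le zeroDyn_cont (iInf_le_of_le zeroDyn_supp ?_)))
      rw [EReal.coe_le_coe_iff]
      have : ∀ ω, G (tailCoords ω) - (zeroDyn n).gains ω = G (tailCoords ω) := by
        intro ω; rw [zeroDyn_gains, sub_zero]
      rw [show (fun ω => G (tailCoords ω) - (zeroDyn n).gains ω)
          = fun ω => G (tailCoords ω) from funext this]
    · refine le_iInf fun D => le_iInf fun hD => le_iInf fun _ => le_iInf fun _ => ?_
      rw [EReal.coe_le_coe_iff, hval Q hQ1 D, hGG' Q hQ1]
      have := gains_nonpos hQ1 hmom hQ2 D hD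
      linarith
  -- inner infimum is ⊥ off the supermartingale set
  have hinfB : ∀ π ∈ PiMu s₀ μ, ¬ IsSupermartingaleLaw π →
      (⨅ (D : Dyn n) (_ : D.Nonneg) (_ : ∀ j, Continuous (D.pos j))
          (_ : ∀ j, HasCompactSupport (D.pos j)),
          ((∫ ω, (G (tailCoords ω) - D.gains ω) ∂π : ℝ) : EReal)) = ⊥ := by
    intro π hπ hnot
    obtain ⟨j, g, hgc, hgs, hg0, hg1, hI⟩ := exists_good_g hπ hmom hnot
    set I := ∫ ω, g (restr j ω) * dS j ω ∂π with hIdef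
    refine EReal.eq_bot_of_le_coe fun r => ?_
    set c : ℝ := max 0 ((∫ ω, G' (tailCoords ω) ∂π - r) / I) with hcdef
    have hc : 0 ≤ c := le_max_left _ _
    obtain ⟨D, hD, hDc, hDs, hDg⟩ := exists_scaled_dyn j g hgc hgs hg0 c hc
    refine le_trans (iInf_le_of_le D (iInf_le_of_le hD
      (iInf_le_of_le hDc (iInf_le_of_le hDs le_rfl)))) ?_
    rw [EReal.coe_le_coe_iff, hval π hπ D]
    have hgains : ∫ ω, D.gains ω ∂π = c * I := by
      rw [show (fun ω => D.gains ω) = fun ω => c * (g (restr j ω) * dS j ω)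
        from funext hDg, integral_const_mul]
    rw [hgains]
    have hcI : ∫ ω, G' (tailCoords ω) ∂π - r ≤ c * I := by
      calc ∫ ω, G' (tailCoords ω) ∂π - r
          = ((∫ ω, G' (tailCoords ω) ∂π - r) / I) * I := by
            field_simp
        _ ≤ c * I := mul_le_mul_of_nonneg_right (le_max_right _ _) hI.le
    linarith
  constructor
  · refine le_antisymm ?_ ?_
    · refine iSup₂_le fun π hπ => ?_
      by_cases hlaw : IsSupermartingaleLaw π
      · have hm : π ∈ MSet s₀ μ := ⟨hπ, hlaw⟩
        rw [hinfM π hm]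
        exact le_iSup₂ (f := fun Q (_ : Q ∈ MSet s₀ μ) =>
          ((∫ ω, G (tailCoords ω) ∂Q : ℝ) : EReal)) π hm
      · rw [hinfB π hπ hlaw]; exact bot_le
    · refine iSup₂_le fun Q hQ => ?_
      rw [← hinfM Q hQ]
      exact le_iSup₂ (f := fun π (_ : π ∈ PiMu s₀ μ) =>
        ⨅ (D : Dyn n) (_ : D.Nonneg) (_ : ∀ j, Continuous (D.pos j))
          (_ : ∀ j, HasCompactSupport (D.pos j)),
          ((∫ ω, (G (tailCoords ω) - D.gains ω) ∂π : ℝ) : EReal)) Q hQ.1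
  · intro π hπ hnm
    have hnot : ¬ IsSupermartingaleLaw π := fun hlaw => hnm ⟨hπ, hlaw⟩
    exact hinfB π hπ hnot

end RobustFin
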